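/- Let ρ_{AB}, σ_{AB} be positive definite density matrices with marginals ρ_A, σ_A, and let α ∈ (−1,0) ∪ (0,1). Suppose that for β = α−1 the identity σ_A^β (ρ_A σ_A^{−α})^{β/(α−1)} ⊗ 1_B = σ_{AB}^β (ρ_{AB} σ_{AB}^{−α})^{β/(α−1)} holds. Then ρ_{AB} = σ_{AB}^{1−α} σ_A^{α−1} ρ_A σ_A^{−α} σ_{AB}^{α} ⊗-extended appropriately, i.e. ρ_{AB} = σ_{AB}^{1−α}(σ_A^{α−1} ρ_A σ_A^{−α} ⊗ 1_B) σ_{AB}^{α}. -/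

import Mathlib

open Matrix ComplexOrder

/-- Real power of a (Hermitian, in practice positive definite) matrix via spectral calculus. -/
noncomputable def mpow {m : Type*} [Fintype m] [DecidableEq m]
    (A : Matrix m m ℂ) (r : ℝ) : Matrix m m ℂ :=
  if h : A.IsHermitian then
    (h.eigenvectorUnitary : Matrix m m ℂ) *
      Matrix.diagonal (fun i => ((h.eigenvalues i ^ r : ℝ) : ℂ)) *
      star (h.eigenvectorUnitary : Matrix m m ℂ)
  else A

/-- Partial trace over the second tensor factor. -/
noncomputable def ptraceB {a b : Type*} [Fintype b] (M : Matrix (a × b) (a × b) ℂ) :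
    Matrix a a ℂ :=
  Matrix.of fun i j => ∑ k, M (i, k) (j, k)

/-- Real power of `ρ σ^{-α}`, defined via its similarity
`ρσ^{-α} = σ^{α/2} (σ^{-α/2} ρ σ^{-α/2}) σ^{-α/2}` to the positive definite matrix
`σ^{-α/2} ρ σ^{-α/2}`:  `(ρσ^{-α})^μ := σ^{α/2} (σ^{-α/2} ρ σ^{-α/2})^μ σ^{-α/2}`. -/
noncomputable def spow {m : Type*} [Fintype m] [DecidableEq m]
    (ρ σ : Matrix m m ℂ) (α μ : ℝ) : Matrix m m ℂ :=
  mpow σ (α/2) * mpow (mpow σ (-(α/2)) * ρ * mpow σ (-(α/2))) μ * mpow σ (-(α/2))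

section Aux

variable {m : Type*} [Fintype m] [DecidableEq m]

lemma mpow_def {A : Matrix m m ℂ} (hA : A.IsHermitian) (r : ℝ) :
    mpow A r = (hA.eigenvectorUnitary : Matrix m m ℂ) *
      Matrix.diagonal (fun i => ((hA.eigenvalues i ^ r : ℝ) : ℂ)) *
      star (hA.eigenvectorUnitary : Matrix m m ℂ) := by
  rw [mpow, dif_pos hA]

lemma mpow_isHermitian {A : Matrix m m ℂ} (hA : A.IsHermitian) (r : ℝ) :
    (mpow A r).IsHermitian := by
  rw [mpow_def hA r]
  have hstar : (star fun i => ((hA.eigenvalues i ^ r : ℝ) : ℂ))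
      = fun i => ((hA.eigenvalues i ^ r : ℝ) : ℂ) := by
    funext i; simp [Complex.conj_ofReal]
  show _ᴴ = _
  simp [star_eq_conjTranspose, conjTranspose_mul, diagonal_conjTranspose, mul_assoc, hstar]

lemma mpow_zero {A : Matrix m m ℂ} (hA : A.IsHermitian) : mpow A 0 = 1 := by
  rw [mpow_def hA]
  simp [Real.rpow_zero]

lemma mpow_one {A : Matrix m m ℂ} (hA : A.IsHermitian) : mpow A 1 = A := by
  rw [mpow_def hA]
  simp only [Real.rpow_one]
  exact (hA.spectral_theorem).symm

lemma mpow_mul_mpow {A : Matrix m m ℂ} (hA : A.PosDef) (r s : ℝ) :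
    mpow A r * mpow A s = mpow A (r + s) := by
  have hu : star (hA.1.eigenvectorUnitary : Matrix m m ℂ) *
      (hA.1.eigenvectorUnitary : Matrix m m ℂ) = 1 :=
    Matrix.UnitaryGroup.star_mul_self _
  have hd : (fun i => ((hA.1.eigenvalues i ^ r : ℝ) : ℂ) * ((hA.1.eigenvalues i ^ s : ℝ) : ℂ))
      = fun i => ((hA.1.eigenvalues i ^ (r + s) : ℝ) : ℂ) := by
    funext i
    simp [← Complex.ofReal_mul, ← Real.rpow_add (hA.eigenvalues_pos i)]
  rw [mpow_def hA.1 r, mpow_def hA.1 s, mpow_def hA.1 (r + s), ← hd,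
    ← diagonal_mul_diagonal]
  simp only [mul_assoc]
  rw [← mul_assoc (star (hA.1.eigenvectorUnitary : Matrix m m ℂ)), hu, one_mul]

lemma spow_one_eq {ρ σ : Matrix m m ℂ} (hρ : ρ.IsHermitian) (hσ : σ.PosDef) (α : ℝ) :
    spow ρ σ α 1 = ρ * mpow σ (-α) := by
  have hB : (mpow σ (-(α/2))).IsHermitian := mpow_isHermitian hσ.1 _
  have hX : (mpow σ (-(α/2)) * ρ * mpow σ (-(α/2))).IsHermitian := by
    show _ᴴ = _
    rw [conjTranspose_mul, conjTranspose_mul, hB, hρ, mul_assoc]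
  have e1 : mpow σ (α/2) * mpow σ (-(α/2)) = 1 := by
    rw [mpow_mul_mpow hσ]
    have : α/2 + -(α/2) = 0 := by ring
    rw [this, mpow_zero hσ.1]
  have e2 : mpow σ (-(α/2)) * mpow σ (-(α/2)) = mpow σ (-α) := by
    have h2 : -(α/2) + -(α/2) = -α := by ring
    rw [mpow_mul_mpow hσ, h2]
  unfold spow
  rw [mpow_one hX]
  calc mpow σ (α/2) * (mpow σ (-(α/2)) * ρ * mpow σ (-(α/2))) * mpow σ (-(α/2))
      = mpow σ (α/2) * mpow σ (-(α/2)) * ρ * (mpow σ (-(α/2)) * mpow σ (-(α/2))) := by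
        simp only [mul_assoc]
    _ = ρ * mpow σ (-α) := by rw [e1, e2, one_mul]

lemma ptraceB_isHermitian {a b : Type*} [Fintype a] [Fintype b]
    {M : Matrix (a × b) (a × b) ℂ} (hM : M.IsHermitian) : (ptraceB M).IsHermitian := by
  ext i j
  simp only [conjTranspose_apply, ptraceB, Matrix.of_apply, star_sum]
  exact Finset.sum_congr rfl fun k _ => by rw [← conjTranspose_apply, hM]

lemma ptraceB_posDef {a b : Type*} [Fintype a] [Fintype b] [DecidableEq b] [Nonempty b]
    {M : Matrix (a × b) (a × b) ℂ} (hM : M.PosDef) : (ptraceB M).PosDef := by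
  refine Matrix.PosDef.of_dotProduct_mulVec_pos ?_ ?_
  · exact ptraceB_isHermitian hM.1
  · intro x hx
    set y : b → (a × b) → ℂ := fun k p => if p.2 = k then x p.1 else 0 with hy
    have hk : ∀ k, star (y k) ⬝ᵥ M *ᵥ (y k)
        = ∑ i, ∑ j, star (x i) * (M (i, k) (j, k) * x j) := by
      intro k
      simp only [dotProduct, Matrix.mulVec, hy, Fintype.sum_prod_type, Pi.star_apply,
        apply_ite (star : ℂ → ℂ), star_zero, ite_mul, mul_ite, zero_mul, mul_zero,
        Finset.sum_ite_eq', Finset.mem_univ, if_true, dotProduct, Finset.mul_sum]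
      refine Finset.sum_congr rfl fun i _ => ?_
      rw [Finset.sum_comm]
      simp
    have hsum : star x ⬝ᵥ (ptraceB M) *ᵥ x = ∑ k, star (y k) ⬝ᵥ M *ᵥ (y k) := by
      simp only [hk]
      simp only [dotProduct, Matrix.mulVec, ptraceB, Matrix.of_apply, Pi.star_apply,
        Finset.mul_sum, Finset.sum_mul]
      conv_rhs => rw [Finset.sum_comm]
      refine Finset.sum_congr rfl fun i _ => ?_
      rw [Finset.sum_comm]
    rw [hsum]
    obtain ⟨i, hi⟩ := Function.ne_iff.mp hx
    obtain ⟨k0⟩ := ‹Nonempty b›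
    refine Finset.sum_pos' (fun k _ => ?_) ⟨k0, Finset.mem_univ _, ?_⟩
    · by_cases hyk : y k = 0
      · simp [hyk]
      · exact le_of_lt (hM.dotProduct_mulVec_pos hyk)
    · refine hM.dotProduct_mulVec_pos ?_
      intro hc
      apply hi
      have := congrFun hc (i, k0)
      simpa [hy] using this

end Aux

open Kronecker in
/-- The `β = α − 1` instance of the equality condition
`σ_A^β (ρ_A σ_A^{−α})^{β/(α−1)} ⊗ 1_B = σ_{AB}^β (ρ_{AB} σ_{AB}^{−α})^{β/(α−1)}`
implies the recovery formula
`ρ_{AB} = σ_{AB}^{1−α}(σ_A^{α−1} ρ_A σ_A^{−α} ⊗ 1_B) σ_{AB}^{α}`. -/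
theorem recovery_from_beta_eq_alpha_sub_one {nA nB : ℕ}
    (ρAB σAB : Matrix (Fin nA × Fin nB) (Fin nA × Fin nB) ℂ)
    (hρ : ρAB.PosDef) (hσ : σAB.PosDef) (hρ1 : ρAB.trace = 1) (hσ1 : σAB.trace = 1)
    (α : ℝ) (hα : α ∈ Set.Ioo (-1:ℝ) 1) (hα0 : α ≠ 0)
    (h : (mpow (ptraceB σAB) (α - 1) *
        spow (ptraceB ρAB) (ptraceB σAB) α ((α - 1)/(α - 1))) ⊗ₖ
          (1 : Matrix (Fin nB) (Fin nB) ℂ) =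
      mpow σAB (α - 1) * spow ρAB σAB α ((α - 1)/(α - 1))) :
    ρAB = mpow σAB (1 - α) *
      ((mpow (ptraceB σAB) (α - 1) * ptraceB ρAB * mpow (ptraceB σAB) (-α)) ⊗ₖ
        (1 : Matrix (Fin nB) (Fin nB) ℂ)) * mpow σAB α := by
  have hBne : Nonempty (Fin nB) := by
    rcases isEmpty_or_nonempty (Fin nB) with hE | hN
    · exfalso
      have h0 : σAB.trace = 0 := by simp [Matrix.trace]
      rw [h0] at hσ1
      exact zero_ne_one hσ1
    · exact hN
  have hA1 : α ≠ 1 := ne_of_lt hα.2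
  have h1 : (α - 1)/(α - 1) = 1 := div_self (sub_ne_zero.mpr hA1)
  have hσA : (ptraceB σAB).PosDef := ptraceB_posDef hσ
  have hρAherm : (ptraceB ρAB).IsHermitian := ptraceB_isHermitian hρ.1
  rw [h1, spow_one_eq hρAherm hσA α, spow_one_eq hρ.1 hσ α] at h
  rw [mul_assoc (mpow (ptraceB σAB) (α - 1))]
  rw [h]
  simp only [← mul_assoc]
  rw [mpow_mul_mpow hσ]
  have e0 : (1 - α) + (α - 1) = 0 := by ring
  rw [e0, mpow_zero hσ.1, one_mul, mul_assoc, mpow_mul_mpow hσ]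
  have e1 : -α + α = 0 := by ring
  rw [e1, mpow_zero hσ.1, mul_one]
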